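/- Let ν be a finite point measure on ℝ≥0 (a finite multiset of points), z₀ a point in the support of ν, and m ∈ ℕ. Define the m-fold falling factorial measure ν^{⊗m,↓}(d(z₁,…,z_m)) = ν(dz₁)(ν−δ_{z₁})(dz₂)…(ν−Σ_{j<m}δ_{z_j})(dz_m). Then ν^{⊗m,↓} − (ν−δ_{z₀})^{⊗m,↓} = Σ_{i=1}^m (ν−δ_{z₀})^{⊗(m−1),↓} ⊗_i δ_{z₀}, where ⊗_i denotes insertion of the Dirac mass δ_{z₀} into the i-th coordinate. -/

import Mathlib

open scoped Classical
open Finset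

/-- The `m`-fold falling factorial (sampling without replacement) measure
`ν^{⊗m,↓}` of a finite point measure `ν` on `ℝ≥0`, encoded as the multiset of
ordered `m`-samples without replacement from the multiset of atoms. -/
noncomputable def factorialSample : ℕ → Multiset NNReal → Multiset (List NNReal)
  | 0, _ => {[]}
  | m + 1, s => s.bind fun z => (factorialSample m (s.erase z)).map fun l => z :: l

lemma bind_finsum {α β γ : Type*} (s : Multiset α) (t : Finset γ) (f : γ → α → Multiset β) :
    s.bind (fun a => ∑ i ∈ t, f i a) = ∑ i ∈ t, s.bind (f i) := by
  classical
  induction t using Finset.induction with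
  | empty => simp
  | insert _ _ h ih => simp [Finset.sum_insert h, Multiset.bind_add, ih]

lemma map_finsum_ms {α β γ : Type*} (t : Finset γ) (S : γ → Multiset α) (f : α → β) :
    (∑ i ∈ t, S i).map f = ∑ i ∈ t, (S i).map f := by
  classical
  induction t using Finset.induction with
  | empty => simp
  | insert _ _ h ih => simp [Finset.sum_insert h, Multiset.map_add, ih]

lemma factorialSample_cons (z₀ : NNReal) (m : ℕ) :
    ∀ μ : Multiset NNReal,
    factorialSample m (z₀ ::ₘ μ)
      = factorialSample m μ
        + ∑ i ∈ Finset.range m,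
            (factorialSample (m - 1) μ).map (fun l => l.insertIdx i z₀) := by
  induction m with
  | zero => intro μ; simp [factorialSample]
  | succ n ih =>
    intro μ
    have herase : ∀ z ∈ μ, (z₀ ::ₘ μ).erase z = z₀ ::ₘ μ.erase z := by
      intro z hz
      by_cases h : z = z₀
      · subst h
        rw [Multiset.erase_cons_head, Multiset.cons_erase hz]
      · rw [Multiset.erase_cons_tail_of_mem hz]
    have key : factorialSample (n + 1) (z₀ ::ₘ μ)
        = ((factorialSample n μ).map (fun l => z₀ :: l))
          + (factorialSample (n + 1) μ
            + ∑ i ∈ Finset.range n,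
                (factorialSample n μ).map (fun l => l.insertIdx (i + 1) z₀)) := by
      show (z₀ ::ₘ μ).bind (fun z => (factorialSample n ((z₀ ::ₘ μ).erase z)).map
          fun l => z :: l) = _
      rw [Multiset.cons_bind, Multiset.erase_cons_head]
      congr 1
      rw [Multiset.bind_congr (fun z hz => by
        rw [herase z hz, ih (μ.erase z), Multiset.map_add, map_finsum_ms])]
      rw [Multiset.bind_add, bind_finsum]
      congr 1
      apply Finset.sum_congr rfl
      intro i hi
      have hn : n - 1 + 1 = n := by
        have := Finset.mem_range.mp hi; omega
      have : ∀ z : NNReal, ((factorialSample (n - 1) (μ.erase z)).map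
            (fun l => l.insertIdx i z₀)).map (fun l => z :: l)
          = ((factorialSample (n - 1) (μ.erase z)).map (fun l => z :: l)).map
            (fun l => l.insertIdx (i + 1) z₀) := by
        intro z
        simp only [Multiset.map_map, Function.comp]
        apply Multiset.map_congr rfl
        intro l _
        exact (List.insertIdx_succ_cons (xs := l) (hd := z) (x := z₀) (i := i)).symm
      rw [Multiset.bind_congr (fun z _ => this z), ← Multiset.map_bind]
      conv_rhs => rw [← hn]
      rfl
    rw [key, Finset.sum_range_succ']
    simp only [List.insertIdx_zero, Nat.add_sub_cancel]
    abel

theorem factorialSample_erase_singleton (ν : Multiset NNReal) (z₀ : NNReal)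
    (hz₀ : z₀ ∈ ν) (m : ℕ) :
    factorialSample m ν
      = factorialSample m (ν.erase z₀)
        + ∑ i ∈ Finset.range m,
            (factorialSample (m - 1) (ν.erase z₀)).map (fun l => l.insertIdx i z₀) := by
  conv_lhs => rw [← Multiset.cons_erase hz₀]
  exact factorialSample_cons z₀ m (ν.erase z₀)
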